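/- arXiv:1206.3101 — 2 statements merged into one kernel-verified Lean document; each statement's English description precedes it below -/
import Mathlib

section
/- Let g_α be a regularization family with residual r_α(t) = 1 - t·g_α(t) satisfying 0 ≤ r_α(t) ≤ 1, the monotonicity r_α(t) ≤ r_β(t) for 0 < α ≤ β, and α·|g_α(t)| ≤ γ* for all t, α > 0. Then for 0 < α ≤ β and all t ≥ 0, one has 0 ≤ r_β(t) − r_α(t) ≤ (1 + γ*)·(t/(α+t))·r_β(t). -/
/-- For a monotone regularization family with residual
`r α t = 1 - t * g α t`, `0 ≤ r α t ≤ 1`, `r` monotone in `α`, and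
`α * |g α t| ≤ γ*`, one has for `0 < α ≤ β` and `t ≥ 0`:
`0 ≤ r β t - r α t ≤ (1 + γ*) * (t / (α + t)) * r β t`. -/
theorem stmt0 (g r : ℝ → ℝ → ℝ) (γstar : ℝ) (hγ : 1 ≤ γstar)
    (hres : ∀ α t, 0 < α → 0 ≤ t → r α t = 1 - t * g α t)
    (hr01 : ∀ α t, 0 < α → 0 ≤ t → 0 ≤ r α t ∧ r α t ≤ 1)
    (hmono : ∀ α β t, 0 < α → α ≤ β → 0 ≤ t → r α t ≤ r β t)
    (hg : ∀ α t, 0 < α → 0 ≤ t → α * |g α t| ≤ γstar) :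
    ∀ α β t, 0 < α → α ≤ β → 0 ≤ t →
      0 ≤ r β t - r α t ∧
      r β t - r α t ≤ (1 + γstar) * (t / (α + t)) * r β t := by
  intro α β t hα hαβ ht
  have hβ : 0 < β := lt_of_lt_of_le hα hαβ
  obtain ⟨hra0, hra1⟩ := hr01 α t hα ht
  obtain ⟨hrb0, hrb1⟩ := hr01 β t hβ ht
  have hm := hmono α β t hα hαβ ht
  refine ⟨by linarith, ?_⟩
  have hat : 0 < α + t := by linarith
  -- key: t * g α t = 1 - r α t, nonneg and ≤ (1+γ*) * t/(α+t)
  have htg : t * g α t = 1 - r α t := by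
    have := hres α t hα ht; linarith
  have hag : α * g α t ≤ γstar := le_trans (by
    have : g α t ≤ |g α t| := le_abs_self _
    nlinarith [hg α t hα ht]) (le_refl _)
  have hsum : (α + t) * g α t ≤ 1 + γstar := by nlinarith
  have hkey : t * g α t ≤ (1 + γstar) * (t / (α + t)) := by
    have heq : t * g α t = (t / (α + t)) * ((α + t) * g α t) := by
      field_simp
    rw [heq]
    calc (t / (α + t)) * ((α + t) * g α t)
        ≤ (t / (α + t)) * (1 + γstar) :=
          mul_le_mul_of_nonneg_left hsum (div_nonneg ht hat.le)
      _ = (1 + γstar) * (t / (α + t)) := mul_comm _ _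
  have hkey' : 1 - r α t ≤ (1 + γstar) * (t / (α + t)) := htg ▸ hkey
  -- r β - r α ≤ r β * (1 - r α)
  have h1 : r β t - r α t ≤ r β t * (1 - r α t) := by nlinarith
  have h2 : r β t * (1 - r α t) ≤ r β t * ((1 + γstar) * (t / (α + t))) :=
    mul_le_mul_of_nonneg_left hkey' hrb0
  linarith [h2, h1, mul_comm (r β t) ((1 + γstar) * (t / (α + t)))]
end

section
/- Suppose the self-similarity assumption holds: there exist c₁ > 1, 0 < c₂ < 1, 0 < t₀ < ‖A‖ such that ∫₀^α d‖E_t(x†−x₀)‖² ≤ c₁² ∫_{c₂α}^∞ r_α²(t) d‖E_t(x†−x₀)‖² for all 0 < α ≤ t₀. Then there is a constant C < ∞ such that for all 0 < α ≤ α₀: ‖A^{1/2} s_α(A)^{1/2} r_α(A)(x†−x₀)‖ ≤ (C/√α)·‖s_α(A) r_α(A) A (x†−x₀)‖. -/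
open MeasureTheory

private lemma aux_small (α t r2 : ℝ) (hα : 0 < α) (ht : 0 ≤ t) (h0 : 0 ≤ r2) (h1 : r2 ≤ 1) :
    t * (α / (t + α)) * r2 ≤ α := by
  have htα : 0 < t + α := by linarith
  have h2 : t * (α / (t + α)) = t * α / (t + α) := by ring
  have h3 : t * α / (t + α) ≤ α := by rw [div_le_iff₀ htα]; nlinarith
  have h4 : 0 ≤ t * (α / (t + α)) := by positivity
  calc t * (α / (t + α)) * r2 ≤ t * (α / (t + α)) * 1 := by
        exact mul_le_mul_of_nonneg_left h1 h4
    _ = t * α / (t + α) := by ring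
    _ ≤ α := h3

private lemma aux_main (α t K r2 : ℝ) (hα : 0 < α) (ht : 0 < t) (hr2 : 0 ≤ r2)
    (hK : t + α ≤ K * t) :
    t * (α / (t + α)) * r2 ≤ K / α * ((α / (t + α)) ^ 2 * r2 * t ^ 2) := by
  have htα : 0 < t + α := by linarith
  rw [div_mul_eq_mul_div, le_div_iff₀ hα]
  have h1 : t * (t + α) ≤ t * (K * t) := by nlinarith
  have h2 : (0:ℝ) ≤ (α / (t + α)) ^ 2 * r2 := by positivity
  have e1 : t * (α / (t + α)) * r2 * α = ((α / (t + α)) ^ 2 * r2) * (t * (t + α)) := by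
    field_simp
  have e2 : K * ((α / (t + α)) ^ 2 * r2 * t ^ 2) = ((α / (t + α)) ^ 2 * r2) * (t * (K * t)) := by
    ring
  rw [e1, e2]
  exact mul_le_mul_of_nonneg_left h1 h2

private lemma aux_tail (α t K rb2 r2 : ℝ) (hα : 0 < α) (ht : 0 < t) (hr2 : 0 ≤ r2)
    (hrb : rb2 ≤ r2) (hK : t + α ≤ K * t) :
    rb2 ≤ K ^ 2 / α ^ 2 * ((α / (t + α)) ^ 2 * r2 * t ^ 2) := by
  have htα : 0 < t + α := by linarith
  have h1 : 1 ≤ K * t / (t + α) := (one_le_div htα).2 (by linarith)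
  have h2 : K ^ 2 / α ^ 2 * ((α / (t + α)) ^ 2 * r2 * t ^ 2) = (K * t / (t + α)) ^ 2 * r2 := by
    field_simp
  rw [h2]
  have h3 : 1 ≤ (K * t / (t + α)) ^ 2 := by nlinarith
  nlinarith [mul_le_mul_of_nonneg_right h3 hr2]

set_option maxHeartbeats 1000000 in
/-- spectral form.  `ν` is the spectral measure of `x† - x₀`
for the compact nonnegative self-adjoint operator `A`, so
`∫₀^α d‖E_t(x†-x₀)‖² = ν [0,α]`,
`‖A^{1/2} s_α(A)^{1/2} r_α(A)(x†-x₀)‖² = ∫ t s_α(t) r_α(t)² dν` and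
`‖s_α(A) r_α(A) A (x†-x₀)‖² = ∫ (s_α(t) r_α(t) t)² dν`.  Under the
self-similarity assumption there is `C < ∞` with, for all `0 < α ≤ α₀`,
`‖A^{1/2} s_α(A)^{1/2} r_α(A)(x†-x₀)‖ ≤ (C/√α) ‖s_α(A) r_α(A) A (x†-x₀)‖`. -/
theorem stmt8 (ν : Measure ℝ) [IsFiniteMeasure ν] (hsupp : ν (Set.Iio 0) = 0)
    (g r : ℝ → ℝ → ℝ) (γstar : ℝ) (hγ : 1 ≤ γstar)
    (hres : ∀ α t, 0 < α → 0 ≤ t → r α t = 1 - t * g α t)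
    (hr01 : ∀ α t, 0 < α → 0 ≤ t → 0 ≤ r α t ∧ r α t ≤ 1)
    (hrmono : ∀ α β t, 0 < α → α ≤ β → 0 ≤ t → r α t ≤ r β t)
    (c₁ c₂ t₀ α₀ : ℝ) (hc₁ : 1 < c₁) (hc₂0 : 0 < c₂) (hc₂1 : c₂ < 1)
    (ht₀ : 0 < t₀) (hα₀ : 0 < α₀)
    -- self-similarity of `x† - x₀` relative to `A`
    (hKN : ∀ α, 0 < α → α ≤ t₀ →
      (ν (Set.Iic α)).toReal ≤
        c₁ ^ 2 * ∫ t in Set.Ici (c₂ * α), (r α t) ^ 2 ∂ν) :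
    ∃ C : ℝ, 0 < C ∧ ∀ α, 0 < α → α ≤ α₀ →
      Real.sqrt (∫ t, t * (α / (t + α)) * (r α t) ^ 2 ∂ν) ≤
        (C / Real.sqrt α) *
          Real.sqrt (∫ t, ((α / (t + α)) * r α t * t) ^ 2 ∂ν) := by
  classical
  set M : ℝ := (1 + α₀ / t₀) / c₂ with hM_def
  set K : ℝ := 1 + M with hK_def
  have hM0 : 0 < M := by positivity
  have hK1 : 1 ≤ K := by simp only [hK_def]; linarith
  set D : ℝ := K + c₁ ^ 2 * K ^ 2 with hD_def
  have hD0 : 0 < D := by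
    have hK0 : 0 < K := by linarith
    have : 0 < c₁ ^ 2 * K ^ 2 := by positivity
    simp only [hD_def]; linarith
  refine ⟨Real.sqrt D, Real.sqrt_pos.mpr hD0, ?_⟩
  intro α hα hαα₀
  set β := min α t₀ with hβ_def
  have hβ0 : 0 < β := lt_min hα ht₀
  have hβt₀ : β ≤ t₀ := min_le_right _ _
  have hβα : β ≤ α := min_le_left _ _
  set s := c₂ * β with hs_def
  have hs0 : 0 < s := mul_pos hc₂0 hβ0
  have hsβ : s ≤ β := by nlinarith
  have hMs : α ≤ M * s := by
    have h1 : M * s = (1 + α₀ / t₀) * β := by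
      simp only [hM_def, hs_def]
      field_simp
    rw [h1]
    rcases le_total α t₀ with h | h
    · have hβα' : β = α := min_eq_left h
      rw [hβα']
      nlinarith [div_nonneg hα₀.le ht₀.le]
    · have hβ' : β = t₀ := min_eq_right h
      have h2 : α₀ / t₀ * t₀ = α₀ := div_mul_cancel₀ _ ht₀.ne'
      rw [hβ']
      nlinarith
  have hKt' : ∀ t : ℝ, s ≤ t → t + α ≤ K * t := by
    intro t hts
    have h2 : M * s ≤ M * t := mul_le_mul_of_nonneg_left hts hM0.le
    simp only [hK_def]
    nlinarith
  have hae : ∀ᵐ t ∂ν, (0:ℝ) ≤ t := by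
    rw [ae_iff]
    simpa [Set.Iio, not_le] using hsupp
  set F : ℝ → ℝ := fun t => t * (α / (t + α)) * r α t ^ 2 with hF_def
  set G : ℝ → ℝ := fun t => ((α / (t + α)) * r α t * t) ^ 2 with hG_def
  have hG0 : ∀ t, 0 ≤ G t := by intro t; simp only [hG_def]; positivity
  by_cases hFint : Integrable F ν
  swap
  · rw [integral_undef hFint, Real.sqrt_zero]
    positivity
  -- integrability of G
  have hGm : AEStronglyMeasurable G ν := by
    have hEq : G = fun t => F t * (t * (α / (t + α))) := by
      funext t; simp only [hF_def, hG_def]; ring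
    rw [hEq]
    exact hFint.aestronglyMeasurable.mul
      ((measurable_id.mul (measurable_const.div (measurable_id.add_const α))).aestronglyMeasurable)
  have hGint : Integrable G ν := by
    refine (hFint.const_mul α).mono hGm ?_
    filter_upwards [hae] with t ht
    have htα : 0 < t + α := by linarith
    have hF0 : 0 ≤ F t := by simp only [hF_def]; positivity
    have htq0 : 0 ≤ t * (α / (t + α)) := by positivity
    have htq : t * (α / (t + α)) ≤ α := by
      have h2 : t * (α / (t + α)) = t * α / (t + α) := by ring
      rw [h2, div_le_iff₀ htα]; nlinarith
    rw [Real.norm_eq_abs, Real.norm_eq_abs, abs_of_nonneg (hG0 t),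
      abs_of_nonneg (mul_nonneg hα.le hF0)]
    have hEq : G t = F t * (t * (α / (t + α))) := by simp only [hF_def, hG_def]; ring
    rw [hEq]
    calc F t * (t * (α / (t + α))) ≤ F t * α := mul_le_mul_of_nonneg_left htq hF0
      _ = α * F t := mul_comm _ _
  have hsplit : ∫ t, F t ∂ν = (∫ t in Set.Iio s, F t ∂ν) + ∫ t in Set.Ici s, F t ∂ν := by
    have h := integral_add_compl (measurableSet_Iio : MeasurableSet (Set.Iio s)) hFint
    rw [Set.compl_Iio] at h
    exact h.symm
  -- tail bound
  have htail : ∫ t in Set.Ici s, F t ∂ν ≤ K / α * ∫ t, G t ∂ν := by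
    have h1 : ∫ t in Set.Ici s, F t ∂ν ≤ ∫ t in Set.Ici s, K / α * G t ∂ν := by
      apply integral_mono_ae hFint.restrict ((hGint.const_mul _).restrict)
      filter_upwards [ae_restrict_of_ae hae, ae_restrict_mem measurableSet_Ici] with t ht hts
      have ht0 : 0 < t := lt_of_lt_of_le hs0 hts
      have hKt : t + α ≤ K * t := hKt' t hts
      have h3 := aux_main α t K (r α t ^ 2) hα ht0 (sq_nonneg _) hKt
      simp only [hF_def, hG_def]
      calc t * (α / (t + α)) * r α t ^ 2
          ≤ K / α * ((α / (t + α)) ^ 2 * r α t ^ 2 * t ^ 2) := h3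
        _ = K / α * ((α / (t + α)) * r α t * t) ^ 2 := by ring
    have h2 : ∫ t in Set.Ici s, K / α * G t ∂ν = K / α * ∫ t in Set.Ici s, G t ∂ν :=
      integral_const_mul _ _
    have h3 : ∫ t in Set.Ici s, G t ∂ν ≤ ∫ t, G t ∂ν :=
      setIntegral_le_integral hGint (Filter.Eventually.of_forall hG0)
    have hKα : 0 ≤ K / α := by positivity
    calc ∫ t in Set.Ici s, F t ∂ν ≤ K / α * ∫ t in Set.Ici s, G t ∂ν := h1.trans_eq h2
      _ ≤ K / α * ∫ t, G t ∂ν := mul_le_mul_of_nonneg_left h3 hKα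
  -- head bound
  have hhead : ∫ t in Set.Iio s, F t ∂ν ≤ α * (ν (Set.Iic β)).toReal := by
    have h1 : ∫ t in Set.Iio s, F t ∂ν ≤ ∫ _t in Set.Iio s, α ∂ν := by
      apply integral_mono_ae hFint.restrict (integrable_const α)
      filter_upwards [ae_restrict_of_ae hae] with t ht
      simp only [hF_def]
      have hr := hr01 α t hα ht
      exact aux_small α t _ hα ht (sq_nonneg _) (by nlinarith [hr.1, hr.2])
    have h2 : ∫ _t in Set.Iio s, α ∂ν = (ν (Set.Iio s)).toReal * α := by
      rw [setIntegral_const, smul_eq_mul]; rfl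
    have h3 : (ν (Set.Iio s)).toReal ≤ (ν (Set.Iic β)).toReal :=
      ENNReal.toReal_mono (measure_ne_top ν _)
        (measure_mono (fun x hx => le_trans (le_of_lt hx) hsβ))
    have := h1.trans_eq h2
    nlinarith [this, h3, hα]
  have hKN' : (ν (Set.Iic β)).toReal ≤ c₁ ^ 2 * ∫ t in Set.Ici s, (r β t) ^ 2 ∂ν := by
    have h := hKN β hβ0 hβt₀
    rw [← hs_def] at h
    exact h
  have hind : ∫ t in Set.Ici s, (r β t) ^ 2 ∂ν ≤ K ^ 2 / α ^ 2 * ∫ t, G t ∂ν := by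
    rw [← integral_indicator measurableSet_Ici]
    have hEq : K ^ 2 / α ^ 2 * ∫ t, G t ∂ν = ∫ t, K ^ 2 / α ^ 2 * G t ∂ν :=
      (integral_const_mul _ _).symm
    rw [hEq]
    apply integral_mono_of_nonneg
    · exact Filter.Eventually.of_forall fun t =>
        Set.indicator_nonneg (fun x _ => sq_nonneg _) t
    · exact hGint.const_mul _
    · filter_upwards [hae] with t ht
      by_cases hts : t ∈ Set.Ici s
      · rw [Set.indicator_of_mem hts]
        have ht0 : 0 < t := lt_of_lt_of_le hs0 hts
        have hKt : t + α ≤ K * t := hKt' t hts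
        have hrb : (r β t) ^ 2 ≤ (r α t) ^ 2 := by
          have h1 := (hr01 β t hβ0 ht).1
          have h2 := hrmono β α t hβ0 hβα ht
          nlinarith
        have h3 := aux_tail α t K ((r β t) ^ 2) ((r α t) ^ 2) hα ht0 (sq_nonneg _) hrb hKt
        calc (r β t) ^ 2 ≤ K ^ 2 / α ^ 2 * ((α / (t + α)) ^ 2 * (r α t) ^ 2 * t ^ 2) := h3
          _ = K ^ 2 / α ^ 2 * G t := by simp only [hG_def]; ring
      · rw [Set.indicator_of_notMem hts]
        exact mul_nonneg (by positivity) (hG0 t)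
  have hGnn : 0 ≤ ∫ t, G t ∂ν := integral_nonneg hG0
  have hmain : ∫ t, F t ∂ν ≤ D / α * ∫ t, G t ∂ν := by
    rw [hsplit]
    have hc₁2 : (0:ℝ) ≤ c₁ ^ 2 := sq_nonneg _
    have hA : ∫ t in Set.Iio s, F t ∂ν ≤ α * (c₁ ^ 2 * (K ^ 2 / α ^ 2 * ∫ t, G t ∂ν)) := by
      calc ∫ t in Set.Iio s, F t ∂ν ≤ α * (ν (Set.Iic β)).toReal := hhead
        _ ≤ α * (c₁ ^ 2 * ∫ t in Set.Ici s, (r β t) ^ 2 ∂ν) :=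
            mul_le_mul_of_nonneg_left hKN' hα.le
        _ ≤ α * (c₁ ^ 2 * (K ^ 2 / α ^ 2 * ∫ t, G t ∂ν)) :=
            mul_le_mul_of_nonneg_left (mul_le_mul_of_nonneg_left hind hc₁2) hα.le
    have hDα : D / α * ∫ t, G t ∂ν =
        K / α * ∫ t, G t ∂ν + α * (c₁ ^ 2 * (K ^ 2 / α ^ 2 * ∫ t, G t ∂ν)) := by
      simp only [hD_def]
      field_simp
    rw [hDα]
    linarith [hA, htail]
  calc Real.sqrt (∫ t, F t ∂ν) ≤ Real.sqrt (D / α * ∫ t, G t ∂ν) :=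
        Real.sqrt_le_sqrt hmain
    _ = Real.sqrt (D / α) * Real.sqrt (∫ t, G t ∂ν) := Real.sqrt_mul (by positivity) _
    _ = Real.sqrt D / Real.sqrt α * Real.sqrt (∫ t, G t ∂ν) := by
        rw [Real.sqrt_div hD0.le]
end
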